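/- Let n, n₁, n₂ be nonnegative integers with n₁ + n₂ > n. Then there exist real numbers ε > 0, r > 1 and C > 0, depending only on n, n₁ and n₂, such that the following holds: for all complex numbers a, a′, for every complex polynomial f of degree ≤ n and every z₀ ∈ ℂ with 0 ≤ Re z₀ < 1 and y₀ := Im z₀ > r, if |f^{(k)}(z₀) − δ_{k,0}·a| ≤ ε·A(f,z₀)/y₀^k for all 0 ≤ k < n₁, and |f̄^{(k)}(z₀) − δ_{k,0}·a′| ≤ ε·A(f,z₀)/y₀^k for all 0 ≤ k < n₂, then A(f,z₀) ≤ C·(|a| + |a′|). Here δ_{k,0} equals 1 if k = 0 and 0 otherwise. -/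

import Mathlib

open Polynomial

/-- `A f z₀ = ∑_{k ≥ 0} |f⁽ᵏ⁾(0)| · (Im z₀)^k` for a complex polynomial `f`
(the sum is finite: only `k ≤ deg f` contribute). -/
noncomputable def polyNormA (f : Polynomial ℂ) (z₀ : ℂ) : ℝ :=
  ∑ k ∈ Finset.range (f.natDegree + 1),
    ‖(Polynomial.derivative^[k] f).eval 0‖ * z₀.im ^ k


namespace Lemma25

/-- Coefficient vector to polynomial. -/
noncomputable def P (n : ℕ) : (Fin (n+1) → ℂ) →ₗ[ℂ] Polynomial ℂ where
  toFun c := ∑ i : Fin (n+1), Polynomial.C (c i) * X ^ (i : ℕ)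
  map_add' c d := by simp [add_mul, Finset.sum_add_distrib]
  map_smul' r c := by simp [smul_eq_C_mul, Finset.mul_sum, mul_assoc]

lemma coeff_P (n : ℕ) (c : Fin (n+1) → ℂ) (m : ℕ) :
    (P n c).coeff m = if h : m < n + 1 then c ⟨m, h⟩ else 0 := by
  simp only [P, LinearMap.coe_mk, AddHom.coe_mk, finset_sum_coeff, coeff_C_mul, coeff_X_pow]
  by_cases h : m < n + 1
  · rw [dif_pos h, Finset.sum_eq_single (⟨m, h⟩ : Fin (n+1))]
    · simp
    · intro b _ hb
      have : m ≠ (b : ℕ) := fun he => hb (by simp [Fin.ext_iff, he.symm])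
      simp [this]
    · simp
  · rw [dif_neg h, Finset.sum_eq_zero]
    intro b _
    have : m ≠ (b : ℕ) := fun he => h (he ▸ b.isLt)
    simp [this]

lemma natDegree_P_le (n : ℕ) (c : Fin (n+1) → ℂ) : (P n c).natDegree ≤ n := by
  refine natDegree_le_iff_coeff_eq_zero.mpr fun m hm => ?_
  rw [coeff_P, dif_neg (by omega)]

lemma P_coeff_self (n : ℕ) (g : Polynomial ℂ) (hg : g.natDegree ≤ n) :
    P n (fun i => g.coeff i) = g := by
  conv_rhs => rw [g.as_sum_range' (n+1) (Nat.lt_succ_of_le hg)]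
  simp only [P, LinearMap.coe_mk, AddHom.coe_mk]
  rw [Fin.sum_univ_eq_sum_range (fun i => Polynomial.C (g.coeff i) * X ^ i)]
  simp [C_mul_X_pow_eq_monomial]

/-- The Hermite-interpolation data map: first `m₂` iterated derivatives at `0`,
then the rest at `1`. -/
noncomputable def T (n m₂ : ℕ) : (Fin (n+1) → ℂ) →ₗ[ℂ] (Fin (n+1) → ℂ) :=
  LinearMap.pi fun j =>
    (Polynomial.leval (if (j : ℕ) < m₂ then (0:ℂ) else 1)) ∘ₗ
      ((derivative : Polynomial ℂ →ₗ[ℂ] Polynomial ℂ) ^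
        (if (j : ℕ) < m₂ then (j : ℕ) else (j : ℕ) - m₂)) ∘ₗ P n

lemma T_apply (n m₂ : ℕ) (c : Fin (n+1) → ℂ) (j : Fin (n+1)) :
    T n m₂ c j = (derivative^[if (j : ℕ) < m₂ then (j : ℕ) else (j : ℕ) - m₂] (P n c)).eval
      (if (j : ℕ) < m₂ then (0:ℂ) else 1) := by
  by_cases h : (j : ℕ) < m₂ <;>
    simp [T, LinearMap.pi_apply, leval_apply, h, Module.End.pow_apply]

lemma T_inj (n m₂ : ℕ) (hm₂ : m₂ ≤ n + 1) : Function.Injective (T n m₂) := by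
  rw [← LinearMap.ker_eq_bot, LinearMap.ker_eq_bot']
  intro c hc
  set g := P n c with hgdef
  have hz : ∀ j : Fin (n+1), (derivative^[if (j : ℕ) < m₂ then (j : ℕ) else (j : ℕ) - m₂] g).eval
      (if (j : ℕ) < m₂ then (0:ℂ) else 1) = 0 := by
    intro j
    have := congr_fun hc j
    rwa [T_apply] at this
  have hroot0 : ∀ k < m₂, (derivative^[k] g).IsRoot 0 := by
    intro k hk
    have := hz ⟨k, lt_of_lt_of_le hk hm₂⟩
    simpa [hk] using this
  have hroot1 : ∀ k < n + 1 - m₂, (derivative^[k] g).IsRoot 1 := by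
    intro k hk
    have := hz ⟨m₂ + k, by omega⟩
    simp only [Nat.not_lt] at *; simpa [Nat.not_lt.mpr (Nat.le_add_right m₂ k), Nat.add_sub_cancel_left] using this
  by_contra hgne
  have hg0 : g ≠ 0 := fun h => hgne (by
    funext i
    have := coeff_P n c (i : ℕ)
    rw [dif_pos i.isLt] at this
    simp only [Pi.zero_apply]
    rw [← this, ← hgdef, h, coeff_zero])
  have hd1 : (X - Polynomial.C (0:ℂ)) ^ m₂ ∣ g := by
    rcases Nat.eq_zero_or_pos m₂ with h | h
    · simp [h]
    · rw [Polynomial.le_rootMultiplicity_iff hg0 |>.symm]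
      have : m₂ - 1 < g.rootMultiplicity 0 := by
        rw [Polynomial.lt_rootMultiplicity_iff_isRoot_iterate_derivative hg0]
        intro m hm; exact hroot0 m (by omega)
      omega
  have hd2 : (X - Polynomial.C (1:ℂ)) ^ (n + 1 - m₂) ∣ g := by
    rcases Nat.eq_zero_or_pos (n + 1 - m₂) with h | h
    · simp [h]
    · rw [Polynomial.le_rootMultiplicity_iff hg0 |>.symm]
      have : n + 1 - m₂ - 1 < g.rootMultiplicity 1 := by
        rw [Polynomial.lt_rootMultiplicity_iff_isRoot_iterate_derivative hg0]
        intro m hm; exact hroot1 m (by omega)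
      omega
  have hcop : IsCoprime ((X - Polynomial.C (0:ℂ)) ^ m₂) ((X - Polynomial.C (1:ℂ)) ^ (n + 1 - m₂)) := by
    refine IsCoprime.pow ?_
    refine Polynomial.isCoprime_X_sub_C_of_isUnit_sub ?_
    simpa using isUnit_one.neg
  have hdvd : (X - Polynomial.C (0:ℂ)) ^ m₂ * (X - Polynomial.C (1:ℂ)) ^ (n + 1 - m₂) ∣ g :=
    hcop.mul_dvd hd1 hd2
  have hdeg : ((X - Polynomial.C (0:ℂ)) ^ m₂ * (X - Polynomial.C (1:ℂ)) ^ (n + 1 - m₂)).natDegree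
      = n + 1 := by
    rw [Polynomial.natDegree_mul (pow_ne_zero _ (Polynomial.X_sub_C_ne_zero 0))
      (pow_ne_zero _ (Polynomial.X_sub_C_ne_zero 1)), Polynomial.natDegree_pow,
      Polynomial.natDegree_pow, Polynomial.natDegree_X_sub_C, Polynomial.natDegree_X_sub_C]
    omega
  have h1 := Polynomial.natDegree_le_of_dvd hdvd hg0
  rw [hdeg] at h1
  have h2 : g.natDegree ≤ n := natDegree_P_le n c
  omega

end Lemma25

namespace Lemma25

lemma iterate_derivative_comp_linear (p : Polynomial ℂ) (b u : ℂ) (k : ℕ) :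
    derivative^[k] (p.comp (Polynomial.C b + Polynomial.C u * X)) =
      Polynomial.C (u ^ k) * (derivative^[k] p).comp (Polynomial.C b + Polynomial.C u * X) := by
  induction k generalizing p with
  | zero => simp
  | succ k ih =>
    have hL : derivative (Polynomial.C b + Polynomial.C u * X) = Polynomial.C u := by simp
    rw [Function.iterate_succ_apply, Function.iterate_succ_apply, Polynomial.derivative_comp, hL,
      Polynomial.iterate_derivative_C_mul, ih, ← mul_assoc, ← Polynomial.C_mul, ← pow_succ']

lemma eval_map_conj (p : Polynomial ℂ) (z : ℂ) :
    (p.map (starRingEnd ℂ)).eval z = (starRingEnd ℂ) (p.eval ((starRingEnd ℂ) z)) := by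
  induction p using Polynomial.induction_on' with
  | add p q hp hq => simp [hp, hq]
  | monomial i a => simp [Polynomial.eval_monomial, map_mul, map_pow]

end Lemma25

namespace Lemma25

lemma abs_eval_iterate_deriv_le (n : ℕ) (c : Fin (n+1) → ℂ) (k : ℕ) (w : ℂ)
    (hw : ‖w‖ ≤ 1) :
    ‖(derivative^[k] (P n c)).eval w‖ ≤ ((n:ℝ)+1) * ((n:ℝ)+1)^n * ‖c‖ := by
  have hexp : derivative^[k] (P n c) =
      ∑ i : Fin (n+1), Polynomial.C (c i) *
        (Polynomial.C (((i:ℕ).descFactorial k : ℂ)) * X ^ ((i:ℕ) - k)) := by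
    show derivative^[k] (∑ i : Fin (n+1), Polynomial.C (c i) * X ^ (i : ℕ)) = _
    rw [Polynomial.iterate_derivative_sum]
    refine Finset.sum_congr rfl fun i _ => ?_
    rw [Polynomial.iterate_derivative_C_mul, Polynomial.iterate_derivative_X_pow_eq_C_mul]
  rw [hexp, Polynomial.eval_finset_sum]
  refine le_trans (norm_sum_le _ _) ?_
  have hterm : ∀ i : Fin (n+1), ‖(Polynomial.C (c i) *
        (Polynomial.C (((i:ℕ).descFactorial k : ℂ)) * X ^ ((i:ℕ) - k))).eval w‖
      ≤ ((n:ℝ)+1)^n * ‖c‖ := by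
    intro i
    rw [Polynomial.eval_mul, Polynomial.eval_mul, Polynomial.eval_C, Polynomial.eval_C,
      Polynomial.eval_pow, Polynomial.eval_X, norm_mul, norm_mul, norm_pow,
      Complex.norm_natCast]
    have h1 : ‖c i‖ ≤ ‖c‖ := by
      simpa using norm_le_pi_norm c i
    have h2 : ((i:ℕ).descFactorial k : ℝ) ≤ ((n:ℝ)+1)^n := by
      have hnat : (i:ℕ).descFactorial k ≤ (n+1)^n := by
        rcases le_or_gt k n with hk | hk
        · calc (i:ℕ).descFactorial k ≤ (i:ℕ)^k := Nat.descFactorial_le_pow _ _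
            _ ≤ (n+1)^k := Nat.pow_le_pow_left (by omega) _
            _ ≤ (n+1)^n := Nat.pow_le_pow_right (by omega) hk
        · have hi : (i:ℕ) < k := lt_of_le_of_lt (by omega : (i:ℕ) ≤ n) hk
          rw [Nat.descFactorial_eq_zero_iff_lt.mpr hi]
          exact Nat.zero_le _
      calc ((i:ℕ).descFactorial k : ℝ) ≤ (((n+1)^n : ℕ) : ℝ) := by exact_mod_cast hnat
        _ = ((n:ℝ)+1)^n := by push_cast; ring
    have h3 : ‖w‖ ^ ((i:ℕ) - k) ≤ 1 :=
      pow_le_one₀ (norm_nonneg _) hw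
    calc ‖c i‖ * (((i:ℕ).descFactorial k : ℝ) * ‖w‖ ^ ((i:ℕ) - k))
        ≤ ‖c‖ * (((n:ℝ)+1)^n * 1) := by
          apply mul_le_mul h1 (mul_le_mul h2 h3 (by positivity) (by positivity))
            (by positivity) (norm_nonneg c)
      _ = ((n:ℝ)+1)^n * ‖c‖ := by ring
  refine le_trans (Finset.sum_le_sum fun i _ => hterm i) ?_
  rw [Finset.sum_const, Finset.card_univ, Fintype.card_fin, nsmul_eq_mul]
  apply le_of_eq
  push_cast
  ring

end Lemma25

set_option maxHeartbeats 1000000 in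
/-- Uniform form of Lemma 2.5: for `n < n₁ + n₂` there exist `ε > 0`, `r > 1`,
`C > 0` depending only on `n, n₁, n₂` such that for all `a, a' ∈ ℂ`, every
polynomial `f` of degree `≤ n` and every `z₀` with `0 ≤ Re z₀ < 1`,
`Im z₀ > r`, the conditions
`|f⁽ᵏ⁾(z₀) − δ_{k,0} a| ≤ ε A(f,z₀)/y₀^k` for `0 ≤ k < n₁` and
`|f̄⁽ᵏ⁾(z₀) − δ_{k,0} a'| ≤ ε A(f,z₀)/y₀^k` for `0 ≤ k < n₂`
imply `A(f,z₀) ≤ C (|a| + |a'|)`. -/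
theorem lemma_2_5_uniform (n n₁ n₂ : ℕ) (hn : n < n₁ + n₂) :
    ∃ ε r C : ℝ, 0 < ε ∧ 1 < r ∧ 0 < C ∧
      ∀ (a a' : ℂ) (f : Polynomial ℂ) (z₀ : ℂ), f.natDegree ≤ n →
        0 ≤ z₀.re → z₀.re < 1 → r < z₀.im →
        (∀ k < n₁,
          ‖(Polynomial.derivative^[k] f).eval z₀ - if k = 0 then a else 0‖
            ≤ ε * polyNormA f z₀ / z₀.im ^ k) →
        (∀ k < n₂,
          ‖(Polynomial.derivative^[k] (f.map (starRingEnd ℂ))).eval z₀ -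
                if k = 0 then a' else 0‖
            ≤ ε * polyNormA f z₀ / z₀.im ^ k) →
        polyNormA f z₀ ≤ C * (‖a‖ + ‖a'‖) := by
  classical
  set m₁ := min n₁ (n + 1) with hm₁def
  set m₂ := n + 1 - m₁ with hm₂def
  have hm₁n₁ : m₁ ≤ n₁ := min_le_left _ _
  have hm₁le : m₁ ≤ n + 1 := min_le_right _ _
  have hm₂n₂ : m₂ ≤ n₂ := by omega
  have hm₂le : m₂ ≤ n + 1 := by omega
  have hinj := Lemma25.T_inj n m₂ hm₂le
  have hbij : Function.Bijective (Lemma25.T n m₂) :=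
    ⟨hinj, LinearMap.injective_iff_surjective.mp hinj⟩
  set e := LinearEquiv.ofBijective _ hbij with hedef
  set K : ℝ :=
    ‖LinearMap.toContinuousLinearMap
      (e.symm : (Fin (n+1) → ℂ) →ₗ[ℂ] (Fin (n+1) → ℂ))‖ + 1 with hKdef
  have hKpos : 0 < K := by positivity
  have hKb : ∀ c : Fin (n+1) → ℂ, ‖c‖ ≤ K * ‖Lemma25.T n m₂ c‖ := by
    intro c
    have h2 : e.symm (Lemma25.T n m₂ c) = c := e.symm_apply_apply c
    have h3 : ‖LinearMap.toContinuousLinearMap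
        (e.symm : (Fin (n+1) → ℂ) →ₗ[ℂ] (Fin (n+1) → ℂ)) (Lemma25.T n m₂ c)‖
        ≤ (K - 1) * ‖Lemma25.T n m₂ c‖ := by
      simpa [hKdef] using
        (LinearMap.toContinuousLinearMap
          (e.symm : (Fin (n+1) → ℂ) →ₗ[ℂ] (Fin (n+1) → ℂ))).le_opNorm (Lemma25.T n m₂ c)
    rw [LinearMap.coe_toContinuousLinearMap'] at h3
    have h4 : (e.symm : (Fin (n+1) → ℂ) →ₗ[ℂ] (Fin (n+1) → ℂ)) (Lemma25.T n m₂ c) = c := h2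
    rw [h4] at h3
    nlinarith [norm_nonneg (Lemma25.T n m₂ c)]
  set M : ℝ := ((n:ℝ)+1) * (((n:ℝ)+1) * ((n:ℝ)+1)^n) * K * 2 ^ n with hMdef
  have hMpos : 0 < M := by positivity
  refine ⟨1 / (2 * M), 2, 2 * M, by positivity, one_lt_two, by positivity, ?_⟩
  intro a a' f z₀ hdeg hre0 hre1 him h₁ h₂
  set ε : ℝ := 1 / (2 * M) with hεdef
  set y := z₀.im with hydef
  have hy1 : (1:ℝ) < y := lt_trans one_lt_two him
  have hy0 : (0:ℝ) < y := lt_trans one_pos hy1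
  set A := polyNormA f z₀ with hAdef
  have hA0 : 0 ≤ A := Finset.sum_nonneg fun k _ => by positivity
  set u : ℂ := 2 * Complex.I * (y : ℂ) with hudef
  have hu0 : u ≠ 0 := by
    simp only [hudef, mul_ne_zero_iff]
    refine ⟨⟨two_ne_zero, Complex.I_ne_zero⟩, ?_⟩
    exact_mod_cast ne_of_gt hy0
  have habsu : ‖u‖ = 2 * y := by
    rw [hudef, norm_mul, norm_mul, Complex.norm_two, Complex.norm_I, Complex.norm_real, Real.norm_eq_abs,
      abs_of_pos hy0, mul_one]
  set L : Polynomial ℂ := Polynomial.C ((starRingEnd ℂ) z₀) + Polynomial.C u * X with hLdef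
  have hLeval : ∀ w : ℂ, L.eval w = (starRingEnd ℂ) z₀ + u * w := by
    intro w; simp [hLdef]
  set g := f.comp L with hgdef
  have hgdeg : g.natDegree ≤ n := by
    have hL1 : L.natDegree ≤ 1 := by
      refine le_trans (Polynomial.natDegree_add_le _ _) ?_
      simp only [Polynomial.natDegree_C, max_le_iff]
      exact ⟨Nat.zero_le _, le_trans (Polynomial.natDegree_mul_le)
        (by simp [Polynomial.natDegree_X])⟩
    calc g.natDegree ≤ f.natDegree * L.natDegree := Polynomial.natDegree_comp_le
      _ ≤ n * 1 := Nat.mul_le_mul hdeg hL1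
      _ = n := mul_one n
  set c : Fin (n+1) → ℂ := fun i => g.coeff i with hcdef
  have hPc : Lemma25.P n c = g := Lemma25.P_coeff_self n g hgdeg
  have hderg : ∀ k, Polynomial.derivative^[k] g =
      Polynomial.C (u ^ k) * (Polynomial.derivative^[k] f).comp L :=
    fun k => Lemma25.iterate_derivative_comp_linear f _ u k
  set w₀ : ℂ := -((starRingEnd ℂ) z₀) / u with hw₀def
  have hLw₀ : L.eval w₀ = 0 := by
    rw [hLeval, hw₀def]
    field_simp
    ring
  have habsz₀ : ‖z₀‖ ≤ 2 * y := by
    have h2 : (‖z₀‖)^2 ≤ (2*y)^2 := by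
      rw [Complex.sq_norm, Complex.normSq_apply]
      nlinarith
    nlinarith [norm_nonneg z₀]
  have hw₀le : ‖w₀‖ ≤ 1 := by
    rw [hw₀def, norm_div, norm_neg, Complex.norm_conj, habsu]
    rw [div_le_one (by linarith)]
    exact habsz₀
  -- pointwise bound on derivatives of g at w₀
  have hgk_bound : ∀ k, ‖(Polynomial.derivative^[k] g).eval w₀‖
      ≤ ((n:ℝ)+1) * ((n:ℝ)+1)^n * ‖c‖ := by
    intro k
    rw [← hPc]
    exact Lemma25.abs_eval_iterate_deriv_le n c k w₀ hw₀le
  -- Step 1 : A ≤ (n+1) * (n+1)^n * ‖c‖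
  have step1 : A ≤ ((n:ℝ)+1) * (((n:ℝ)+1) * ((n:ℝ)+1)^n * ‖c‖) := by
    have hterm : ∀ k ∈ Finset.range (f.natDegree + 1),
        ‖(Polynomial.derivative^[k] f).eval 0‖ * y ^ k
          ≤ ((n:ℝ)+1) * ((n:ℝ)+1)^n * ‖c‖ := by
      intro k _
      have hval : (Polynomial.derivative^[k] g).eval w₀
          = u ^ k * (Polynomial.derivative^[k] f).eval 0 := by
        rw [hderg, Polynomial.eval_mul, Polynomial.eval_C, Polynomial.eval_comp, hLw₀]
      have habs : ‖(Polynomial.derivative^[k] g).eval w₀‖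
          = (2*y)^k * ‖(Polynomial.derivative^[k] f).eval 0‖ := by
        rw [hval, norm_mul, norm_pow, habsu]
      have hb := hgk_bound k
      rw [habs] at hb
      have hmono : ‖(Polynomial.derivative^[k] f).eval 0‖ * y ^ k
          ≤ (2*y)^k * ‖(Polynomial.derivative^[k] f).eval 0‖ := by
        rw [mul_comm]
        apply mul_le_mul_of_nonneg_right _ (norm_nonneg _)
        apply pow_le_pow_left₀ (by positivity) (by linarith)
      linarith
    calc A ≤ ∑ _k ∈ Finset.range (f.natDegree + 1),
          ((n:ℝ)+1) * ((n:ℝ)+1)^n * ‖c‖ := Finset.sum_le_sum hterm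
      _ = (f.natDegree + 1 : ℝ) * (((n:ℝ)+1) * ((n:ℝ)+1)^n * ‖c‖) := by
          rw [Finset.sum_const, Finset.card_range]; push_cast; ring
      _ ≤ ((n:ℝ)+1) * (((n:ℝ)+1) * ((n:ℝ)+1)^n * ‖c‖) := by
          apply mul_le_mul_of_nonneg_right _ (by positivity)
          push_cast
          have : (f.natDegree : ℝ) ≤ (n : ℝ) := by exact_mod_cast hdeg
          linarith
  have step2 := hKb c
  -- key arithmetic bound
  have key : ∀ (k : ℕ) (v w : ℂ), k ≤ n →
      ‖v - (if k = 0 then w else 0)‖ ≤ ε * A / y ^ k →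
      (2*y)^k * ‖v‖ ≤ 2^n * (ε * A + ‖w‖) := by
    intro k v w hk hb
    have h2n : (1:ℝ) ≤ 2^n := one_le_pow₀ (by norm_num : (1:ℝ) ≤ 2)
    have hεA : 0 ≤ ε * A := by positivity
    rcases eq_or_ne k 0 with hk0 | hk0
    · subst hk0
      rw [if_pos rfl, pow_zero, div_one] at hb
      rw [pow_zero, one_mul]
      have habsv : ‖v‖ ≤ ε * A + ‖w‖ := by
        calc ‖v‖ = ‖(v - w) + w‖ := by rw [sub_add_cancel]
          _ ≤ ‖v - w‖ + ‖w‖ := norm_add_le _ _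
          _ ≤ ε * A + ‖w‖ := by linarith
      have hfin : ε * A + ‖w‖ ≤ 2^n * (ε * A + ‖w‖) :=
        le_mul_of_one_le_left (by positivity) h2n
      linarith
    · rw [if_neg hk0, sub_zero] at hb
      have hyk : (0:ℝ) < y ^ k := by positivity
      have h1 : (2*y)^k * ‖v‖ ≤ (2*y)^k * (ε * A / y ^ k) := by
        apply mul_le_mul_of_nonneg_left hb (by positivity)
      have h2 : (2*y)^k * (ε * A / y ^ k) = 2^k * (ε * A) := by
        rw [mul_pow]; field_simp
      have h3 : (2:ℝ)^k ≤ 2^n := pow_le_pow_right₀ (by norm_num) hk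
      have h4 : (2:ℝ)^k * (ε * A) ≤ 2^n * (ε * A) :=
        mul_le_mul_of_nonneg_right h3 hεA
      nlinarith [norm_nonneg w]
  -- Step 3
  have step3 : ‖Lemma25.T n m₂ c‖
      ≤ 2^n * (ε * A + ‖a‖ + ‖a'‖) := by
    rw [pi_norm_le_iff_of_nonneg (by positivity)]
    intro j
    rw [Lemma25.T_apply, hPc]
    by_cases hj : (j:ℕ) < m₂
    · rw [if_pos hj, if_pos hj]
      have hval : (Polynomial.derivative^[(j:ℕ)] g).eval 0
          = u ^ (j:ℕ) * (Polynomial.derivative^[(j:ℕ)] f).eval ((starRingEnd ℂ) z₀) := by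
        rw [hderg, Polynomial.eval_mul, Polynomial.eval_C, Polynomial.eval_comp, hLeval]
        norm_num
      have hhyp := h₂ (j:ℕ) (lt_of_lt_of_le hj hm₂n₂)
      have hrw : (Polynomial.derivative^[(j:ℕ)] (f.map (starRingEnd ℂ))).eval z₀
          = (starRingEnd ℂ) ((Polynomial.derivative^[(j:ℕ)] f).eval ((starRingEnd ℂ) z₀)) := by
        rw [Polynomial.iterate_derivative_map, Lemma25.eval_map_conj]
      rw [hrw] at hhyp
      set v := (Polynomial.derivative^[(j:ℕ)] f).eval ((starRingEnd ℂ) z₀) with hvdef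
      have hhyp2 : ‖v - (if (j:ℕ) = 0 then (starRingEnd ℂ) a' else 0)‖
          ≤ ε * A / y ^ (j:ℕ) := by
        have : ‖(starRingEnd ℂ) v - (if (j:ℕ) = 0 then a' else 0)‖
            = ‖v - (if (j:ℕ) = 0 then (starRingEnd ℂ) a' else 0)‖ := by
          rw [← Complex.norm_conj ((starRingEnd ℂ) v - _)]
          congr 1
          rw [map_sub, Complex.conj_conj]
          congr 1
          split <;> simp
        rw [this] at hhyp
        exact hhyp
      have := key (j:ℕ) v ((starRingEnd ℂ) a') (by omega) hhyp2
      calc ‖(Polynomial.derivative^[(j:ℕ)] g).eval 0‖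
          = (2*y)^(j:ℕ) * ‖v‖ := by
            rw [hval, norm_mul, norm_pow, habsu]
        _ ≤ 2^n * (ε * A + ‖(starRingEnd ℂ) a'‖) := this
        _ ≤ 2^n * (ε * A + ‖a‖ + ‖a'‖) := by
            rw [Complex.norm_conj]
            have h2n : (0:ℝ) ≤ 2^n := by positivity
            nlinarith [norm_nonneg a, norm_nonneg a', hA0,
              mul_le_mul_of_nonneg_left (le_refl (ε * A)) h2n]
    · rw [if_neg hj, if_neg hj]
      set k := (j:ℕ) - m₂ with hkdef
      have hkm₁ : k < m₁ := by have := j.isLt; omega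
      have hkn : k ≤ n := by have := j.isLt; omega
      have hval : (Polynomial.derivative^[k] g).eval 1
          = u ^ k * (Polynomial.derivative^[k] f).eval z₀ := by
        rw [hderg, Polynomial.eval_mul, Polynomial.eval_C, Polynomial.eval_comp, hLeval]
        congr 2
        rw [mul_one]
        apply Complex.ext <;>
          simp [Complex.add_im, Complex.add_re, hudef, hydef] <;> ring
      have hhyp := h₁ k (lt_of_lt_of_le hkm₁ hm₁n₁)
      have := key k ((Polynomial.derivative^[k] f).eval z₀) a hkn hhyp
      calc ‖(Polynomial.derivative^[k] g).eval 1‖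
          = (2*y)^k * ‖(Polynomial.derivative^[k] f).eval z₀‖ := by
            rw [hval, norm_mul, norm_pow, habsu]
        _ ≤ 2^n * (ε * A + ‖a‖) := this
        _ ≤ 2^n * (ε * A + ‖a‖ + ‖a'‖) := by
            have h2n : (0:ℝ) ≤ 2^n := by positivity
            nlinarith [norm_nonneg a']
  -- final arithmetic
  have hchain : A ≤ M * (ε * A + ‖a‖ + ‖a'‖) := by
    have hc0 : (0:ℝ) ≤ ((n:ℝ)+1) * (((n:ℝ)+1) * ((n:ℝ)+1)^n) := by positivity
    have h5 : A ≤ ((n:ℝ)+1) * (((n:ℝ)+1) * ((n:ℝ)+1)^n) * (K * ‖Lemma25.T n m₂ c‖) := by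
      calc A ≤ ((n:ℝ)+1) * (((n:ℝ)+1) * ((n:ℝ)+1)^n * ‖c‖) := step1
        _ = ((n:ℝ)+1) * (((n:ℝ)+1) * ((n:ℝ)+1)^n) * ‖c‖ := by ring
        _ ≤ ((n:ℝ)+1) * (((n:ℝ)+1) * ((n:ℝ)+1)^n) * (K * ‖Lemma25.T n m₂ c‖) :=
            mul_le_mul_of_nonneg_left step2 hc0
    calc A ≤ ((n:ℝ)+1) * (((n:ℝ)+1) * ((n:ℝ)+1)^n) * (K * ‖Lemma25.T n m₂ c‖) := h5
      _ ≤ ((n:ℝ)+1) * (((n:ℝ)+1) * ((n:ℝ)+1)^n) *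
          (K * (2^n * (ε * A + ‖a‖ + ‖a'‖))) := by
          apply mul_le_mul_of_nonneg_left _ hc0
          exact mul_le_mul_of_nonneg_left step3 (le_of_lt hKpos)
      _ = M * (ε * A + ‖a‖ + ‖a'‖) := by rw [hMdef]; ring
  have hMε : M * ε = 1/2 := by
    rw [hεdef]
    field_simp
  have hexpand : M * (ε * A + ‖a‖ + ‖a'‖)
      = M * ε * A + M * (‖a‖ + ‖a'‖) := by ring
  rw [hexpand, hMε] at hchain
  linarith
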